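/- The group PSL(2, F_7) has no disjoint pair (A_1, A_2) of spherical systems of generators with A_1 of type [2,2,2,2,2,2,2,2] and A_2 of type [2,3,7]. -/

import Mathlib

set_option maxRecDepth 100000

/-- `A` is a spherical system of generators of `G` of type `T = [m₁, ..., m_r]`:
the entries of `A` generate `G`, their product is `1`, and the list of orders of the
entries of `A` is a permutation of `T`. -/
def SphericalSystem {G : Type*} [Group G] (A : List G) (T : List ℕ) : Prop :=
  Subgroup.closure {g : G | g ∈ A} = ⊤ ∧ A.prod = 1 ∧ (A.map orderOf).Perm T

/-- The stabilizer set `Σ(A) = ⋃_{h ∈ G} ⋃_{j ∈ ℤ} ⋃ᵢ {h gᵢʲ h⁻¹}` of a tuple `A`. -/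
def SigmaSet {G : Type*} [Group G] (A : List G) : Set G :=
  {x | ∃ h : G, ∃ g ∈ A, ∃ j : ℤ, x = h * g ^ j * h⁻¹}

/-- `PSL(2, 𝔽₇)`: the quotient of `SL(2, ℤ/7ℤ)` by its center. -/
abbrev PSL27 :=
  Matrix.SpecialLinearGroup (Fin 2) (ZMod 7) ⧸
    Subgroup.center (Matrix.SpecialLinearGroup (Fin 2) (ZMod 7))

namespace Psl27Aux

abbrev SL7 := Matrix.SpecialLinearGroup (Fin 2) (ZMod 7)

def J : SL7 := ⟨!![0, -1; 1, 0], by decide⟩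

lemma sq_one_entries : ∀ a b c d : ZMod 7, a * d - b * c = 1 →
    a * a + b * c = 1 → a * b + b * d = 0 → c * a + d * c = 0 → c * b + d * d = 1 →
    (a = 1 ∧ b = 0 ∧ c = 0 ∧ d = 1) ∨ (a = -1 ∧ b = 0 ∧ c = 0 ∧ d = -1) := by decide

lemma exists_v : ∀ a b c d : ZMod 7, a * d - b * c = 1 →
    a * a + b * c = -1 → a * b + b * d = 0 → c * a + d * c = 0 → c * b + d * d = -1 →
    ∃ x y : ZMod 7, c * x * x + (d - a) * x * y - b * y * y = 1 := by decide

lemma sq_unit : ∀ r : ZMod 7, r ^ 2 = 1 → r = 1 ∨ r = -1 := by decide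

/-- Entry equations of `M * M = ε` for `M : SL7`. -/
lemma entries_of_sq {M : SL7} {E : Matrix (Fin 2) (Fin 2) (ZMod 7)}
    (h : (M.1 : Matrix (Fin 2) (Fin 2) (ZMod 7)) * M.1 = E) :
    M.1 0 0 * M.1 0 0 + M.1 0 1 * M.1 1 0 = E 0 0 ∧
    M.1 0 0 * M.1 0 1 + M.1 0 1 * M.1 1 1 = E 0 1 ∧
    M.1 1 0 * M.1 0 0 + M.1 1 1 * M.1 1 0 = E 1 0 ∧
    M.1 1 0 * M.1 0 1 + M.1 1 1 * M.1 1 1 = E 1 1 := by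
  have e : ∀ i j, ((M.1 : Matrix (Fin 2) (Fin 2) (ZMod 7)) * M.1) i j = E i j :=
    fun i j => by rw [h]
  refine ⟨?_, ?_, ?_, ?_⟩
  · simpa [Matrix.mul_apply, Fin.sum_univ_two] using e 0 0
  · simpa [Matrix.mul_apply, Fin.sum_univ_two] using e 0 1
  · simpa [Matrix.mul_apply, Fin.sum_univ_two] using e 1 0
  · simpa [Matrix.mul_apply, Fin.sum_univ_two] using e 1 1

lemma det_entries (M : SL7) : M.1 0 0 * M.1 1 1 - M.1 0 1 * M.1 1 0 = 1 := by
  have := M.2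
  rwa [Matrix.det_fin_two] at this

lemma scalar_neg_one :
    (Matrix.scalar (Fin 2)) (-1 : ZMod 7) = (-1 : Matrix (Fin 2) (Fin 2) (ZMod 7)) := by
  rw [map_neg, map_one]

lemma center_iff (M : SL7) :
    M ∈ Subgroup.center SL7 ↔ M = 1 ∨ M = -1 := by
  rw [Matrix.SpecialLinearGroup.mem_center_iff]
  constructor
  · rintro ⟨r, hr, hM⟩
    rcases sq_unit r (by simpa using hr) with rfl | rfl
    · left
      apply Subtype.ext
      rw [← hM, map_one]
      rfl
    · right
      apply Subtype.ext
      rw [← hM, scalar_neg_one, Matrix.SpecialLinearGroup.coe_neg]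
      rfl
  · rintro (rfl | rfl)
    · exact ⟨1, by norm_num, by rw [map_one]; rfl⟩
    · refine ⟨-1, by norm_num, ?_⟩
      rw [scalar_neg_one, Matrix.SpecialLinearGroup.coe_neg]
      rfl

lemma conj_J {M : SL7} (hM : M * M = -1) : ∃ C : SL7, C * J = M * C := by
  have hmul : (M.1 : Matrix (Fin 2) (Fin 2) (ZMod 7)) * M.1 =
      -(1 : Matrix (Fin 2) (Fin 2) (ZMod 7)) := by
    have := congrArg Subtype.val hM
    simpa [Matrix.SpecialLinearGroup.coe_neg] using this
  obtain ⟨h00, h01, h10, h11⟩ := entries_of_sq hmul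
  set a := M.1 0 0 with ha
  set b := M.1 0 1 with hb
  set c := M.1 1 0 with hc
  set d := M.1 1 1 with hd
  simp only [Matrix.neg_apply, Matrix.one_apply_eq, Matrix.one_apply_ne (by decide : (0 : Fin 2) ≠ 1),
    Matrix.one_apply_ne (by decide : (1 : Fin 2) ≠ 0), neg_zero] at h00 h01 h10 h11
  have hdet : a * d - b * c = 1 := det_entries M
  obtain ⟨x, y, hxy⟩ := exists_v a b c d hdet h00 h01 h10 h11
  have hdetC : (!![x, a * x + b * y; y, c * x + d * y] :
      Matrix (Fin 2) (Fin 2) (ZMod 7)).det = 1 := by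
    rw [Matrix.det_fin_two_of]
    linear_combination hxy
  refine ⟨⟨!![x, a * x + b * y; y, c * x + d * y], hdetC⟩, ?_⟩
  ext i j
  have hMeta : (M.1 : Matrix (Fin 2) (Fin 2) (ZMod 7)) = !![a, b; c, d] := by
    rw [ha, hb, hc, hd]; exact Matrix.eta_fin_two _
  erw [Matrix.SpecialLinearGroup.coe_mul, Matrix.SpecialLinearGroup.coe_mul]
  simp only [J, hMeta]
  fin_cases i <;> fin_cases j <;>
    simp [Matrix.mul_apply, Fin.sum_univ_two] <;>
    first
      | ring1
      | linear_combination (-x : ZMod 7) * h00 + (-y : ZMod 7) * h01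
      | linear_combination (-x : ZMod 7) * h10 + (-y : ZMod 7) * h11

lemma sq_one {M : SL7} (h : M * M = 1) : M = 1 ∨ M = -1 := by
  have hmul : (M.1 : Matrix (Fin 2) (Fin 2) (ZMod 7)) * M.1 = 1 := by
    have := congrArg Subtype.val h
    simpa using this
  obtain ⟨h00, h01, h10, h11⟩ := entries_of_sq hmul
  simp only [Matrix.one_apply_eq, Matrix.one_apply_ne (by decide : (0 : Fin 2) ≠ 1),
    Matrix.one_apply_ne (by decide : (1 : Fin 2) ≠ 0)] at h00 h01 h10 h11
  rcases sq_one_entries _ _ _ _ (det_entries M) h00 h01 h10 h11 with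
    ⟨e1, e2, e3, e4⟩ | ⟨e1, e2, e3, e4⟩
  · left
    apply Subtype.ext
    rw [Matrix.eta_fin_two M.1, e1, e2, e3, e4]
    decide
  · right
    apply Subtype.ext
    rw [Matrix.eta_fin_two M.1, e1, e2, e3, e4, Matrix.SpecialLinearGroup.coe_neg]
    decide

lemma involution_conj (x : PSL27) (hx : orderOf x = 2) :
    ∃ h : PSL27, h * (QuotientGroup.mk J : PSL27) * h⁻¹ = x := by
  obtain ⟨M, rfl⟩ := QuotientGroup.mk_surjective x
  have hx1 : (QuotientGroup.mk M : PSL27) ≠ 1 := by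
    intro h
    rw [h, orderOf_one] at hx
    exact absurd hx (by norm_num)
  have hsq : (QuotientGroup.mk M : PSL27) * QuotientGroup.mk M = 1 := by
    have := pow_orderOf_eq_one (QuotientGroup.mk M : PSL27)
    rwa [hx, pow_two] at this
  have hker : M * M ∈ Subgroup.center SL7 := by
    rw [← QuotientGroup.eq_one_iff, QuotientGroup.mk_mul]
    exact hsq
  have hMsq : M * M = -1 := by
    rcases (center_iff _).mp hker with h1 | h1
    · exfalso
      apply hx1
      rw [QuotientGroup.eq_one_iff]
      exact (center_iff M).mpr (sq_one h1)
    · exact h1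
  obtain ⟨C, hC⟩ := conj_J hMsq
  refine ⟨QuotientGroup.mk C, ?_⟩
  have hCJC : C * J * C⁻¹ = M := by
    rw [hC]
    group
  rw [← QuotientGroup.mk_inv, ← QuotientGroup.mk_mul, ← QuotientGroup.mk_mul, hCJC]

end Psl27Aux

/-- `PSL(2, 𝔽₇)` has no disjoint pair of spherical systems of generators of types
`[2,2,2,2,2,2,2,2]` and `[2,3,7]`. -/
theorem psl27_no_disjoint_pair_2e8_237 :
    ¬ ∃ A₁ A₂ : List PSL27,
      SphericalSystem A₁ [2, 2, 2, 2, 2, 2, 2, 2] ∧ SphericalSystem A₂ [2, 3, 7] ∧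
        SigmaSet A₁ ∩ SigmaSet A₂ = {1} := by
  rintro ⟨A₁, A₂, ⟨-, -, hp1⟩, ⟨-, -, hp2⟩, hint⟩
  have h1 : (2 : ℕ) ∈ A₁.map orderOf := hp1.mem_iff.mpr (by simp)
  have h2 : (2 : ℕ) ∈ A₂.map orderOf := hp2.mem_iff.mpr (by simp)
  obtain ⟨g₁, hg₁A, hg₁⟩ := List.mem_map.mp h1
  obtain ⟨g₂, hg₂A, hg₂⟩ := List.mem_map.mp h2
  obtain ⟨h₁, hh₁⟩ := Psl27Aux.involution_conj g₁ hg₁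
  obtain ⟨h₂, hh₂⟩ := Psl27Aux.involution_conj g₂ hg₂
  have hmem1 : g₂ ∈ SigmaSet A₁ :=
    ⟨h₂ * h₁⁻¹, g₁, hg₁A, 1, by rw [zpow_one, ← hh₂, ← hh₁]; group⟩
  have hmem2 : g₂ ∈ SigmaSet A₂ := ⟨1, g₂, hg₂A, 1, by simp⟩
  have hg2one : g₂ = 1 := by
    have : g₂ ∈ ({1} : Set PSL27) := hint ▸ Set.mem_inter hmem1 hmem2
    simpa using this
  rw [hg2one, orderOf_one] at hg₂
  exact absurd hg₂ (by norm_num)
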